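/- For every edge coloring of K_n in which every 4 vertices span at least 5 distinct colors, the number of colors used is at least 5(n-1)/6. Equivalently, f(n,4,5) ≥ 5(n-1)/6. -/

import Mathlib

open Finset

private lemma image_erase_eq {α β : Type*} [DecidableEq α] [DecidableEq β]
    {F : Finset α} {f : α → β} {u w : α}
    (hw : w ∈ F) (hne : w ≠ u) (hfw : f u = f w) :
    (F.erase u).image f = F.image f := by
  apply Finset.Subset.antisymm (Finset.image_subset_image (Finset.erase_subset _ _))
  intro b hb
  obtain ⟨x, hx, rfl⟩ := Finset.mem_image.mp hb
  by_cases hxu : x = u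
  · subst hxu
    exact Finset.mem_image.mpr ⟨w, Finset.mem_erase.mpr ⟨hne, hw⟩, hfw.symm⟩
  · exact Finset.mem_image.mpr ⟨x, Finset.mem_erase.mpr ⟨hxu, hx⟩, rfl⟩

private lemma image_card_add_two_le {α β : Type*} [DecidableEq α] [DecidableEq β]
    {F : Finset α} {f : α → β} {e1 e2 e3 e4 : α}
    (h1 : e1 ∈ F) (h2 : e2 ∈ F) (h3 : e3 ∈ F) (h4 : e4 ∈ F)
    (h12 : e1 ≠ e2) (h34 : e3 ≠ e4)
    (hf12 : f e1 = f e2) (hf34 : f e3 = f e4)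
    (hp : ({e1, e2} : Finset α) ≠ {e3, e4}) :
    (F.image f).card + 2 ≤ F.card := by
  obtain ⟨x, y, hx, hy, hxy, himg⟩ :
      ∃ x y, x ∈ F ∧ y ∈ F ∧ x ≠ y ∧ ((F.erase x).erase y).image f = F.image f := by
    have houter : (F.erase e2).image f = F.image f :=
      image_erase_eq h1 h12 hf12.symm
    by_cases h23 : e2 = e3
    · subst h23
      have he14 : e1 ≠ e4 := by
        intro h; subst h
        exact hp (Finset.pair_comm e1 e2)
      refine ⟨e2, e4, h2, h4, h34, ?_⟩
      rw [image_erase_eq (F := F.erase e2) (Finset.mem_erase.mpr ⟨h12, h1⟩) he14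
        (hf34.symm.trans hf12.symm), houter]
    · by_cases h24 : e2 = e4
      · subst h24
        have he13 : e1 ≠ e3 := by
          intro h; subst h; exact hp rfl
        refine ⟨e2, e3, h2, h3, Ne.symm h34, ?_⟩
        rw [image_erase_eq (F := F.erase e2) (Finset.mem_erase.mpr ⟨h12, h1⟩) he13
          (hf34.trans hf12.symm), houter]
      · refine ⟨e2, e4, h2, h4, h24, ?_⟩
        rw [image_erase_eq (F := F.erase e2)
          (Finset.mem_erase.mpr ⟨fun h => h23 h.symm, h3⟩) h34 hf34.symm, houter]
  have hyx : y ∈ F.erase x := Finset.mem_erase.mpr ⟨Ne.symm hxy, hy⟩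
  have h2F : 2 ≤ F.card := Finset.one_lt_card.mpr ⟨x, hx, y, hy, hxy⟩
  have hcard : ((F.erase x).erase y).card + 2 = F.card := by
    rw [Finset.card_erase_of_mem hyx, Finset.card_erase_of_mem hx]
    omega
  calc (F.image f).card + 2 = (((F.erase x).erase y).image f).card + 2 := by rw [himg]
    _ ≤ ((F.erase x).erase y).card + 2 := Nat.add_le_add_right Finset.card_image_le 2
    _ = F.card := hcard

private lemma colorSet_eq {n : ℕ} (c : Sym2 (Fin n) → ℕ) (S : Finset (Fin n)) :
    {k : ℕ | ∃ u ∈ S, ∃ v ∈ S, u ≠ v ∧ c s(u, v) = k} =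
      ↑(S.offDiag.image fun p => c s(p.1, p.2)) := by
  ext k
  simp only [Set.mem_setOf_eq, Finset.coe_image, Set.mem_image, Finset.mem_coe,
    Finset.mem_offDiag]
  constructor
  · rintro ⟨u, hu, v, hv, huv, hk⟩
    exact ⟨(u, v), ⟨hu, hv, huv⟩, hk⟩
  · rintro ⟨⟨u, v⟩, ⟨hu, hv, huv⟩, hk⟩
    exact ⟨u, hu, v, hv, huv, hk⟩

private lemma sym2_ne {n : ℕ} {v x y : Fin n} (h1 : x ≠ v) (h2 : x ≠ y) :
    s(v, x) ≠ s(v, y) := by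
  intro h
  rcases Sym2.eq_iff.mp h with ⟨-, h'⟩ | ⟨h', h''⟩
  · exact h2 h'
  · exact h1 h''

private lemma violation {n : ℕ} {c : Sym2 (Fin n) → ℕ}
    (hn : 4 ≤ n)
    (hc : ∀ s : Finset (Fin n), s.card = 4 →
      5 ≤ {k : ℕ | ∃ u ∈ s, ∃ v ∈ s, u ≠ v ∧ c s(u, v) = k}.ncard)
    {T : Finset (Fin n)} (hT : T.card ≤ 4)
    {x1 y1 x2 y2 x3 y3 x4 y4 : Fin n}
    (hx1 : x1 ∈ T) (hy1 : y1 ∈ T) (hx2 : x2 ∈ T) (hy2 : y2 ∈ T)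
    (hx3 : x3 ∈ T) (hy3 : y3 ∈ T) (hx4 : x4 ∈ T) (hy4 : y4 ∈ T)
    (hd1 : x1 ≠ y1) (hd2 : x2 ≠ y2) (hd3 : x3 ≠ y3) (hd4 : x4 ≠ y4)
    (h12 : s(x1, y1) ≠ s(x2, y2)) (h34 : s(x3, y3) ≠ s(x4, y4))
    (hp : ({s(x1, y1), s(x2, y2)} : Finset (Sym2 (Fin n))) ≠ {s(x3, y3), s(x4, y4)})
    (hc12 : c s(x1, y1) = c s(x2, y2)) (hc34 : c s(x3, y3) = c s(x4, y4)) : False := by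
  obtain ⟨S, hTS, hS4⟩ := Finset.exists_superset_card_eq hT (by simp [hn])
  have h5 := hc S hS4
  rw [colorSet_eq, Set.ncard_coe_finset] at h5
  have himg : S.offDiag.image (fun p => c s(p.1, p.2))
      = (S.offDiag.image fun p : Fin n × Fin n => s(p.1, p.2)).image c := by
    rw [Finset.image_image]; rfl
  set E6 := S.offDiag.image fun p : Fin n × Fin n => s(p.1, p.2) with hE6def
  have hmem : ∀ x y : Fin n, x ∈ T → y ∈ T → x ≠ y → s(x, y) ∈ E6 := fun x y hx hy hxy =>
    Finset.mem_image.mpr ⟨(x, y), Finset.mem_offDiag.mpr ⟨hTS hx, hTS hy, hxy⟩, rfl⟩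
  have hE6 : E6.card ≤ 6 := by
    obtain ⟨a, b, d, e, hS⟩ : ∃ a b d e, S = {a, b, d, e} := by
      rw [show (4 : ℕ) = 3 + 1 from rfl, Finset.card_eq_succ] at hS4
      obtain ⟨a, t, hat, hins, ht⟩ := hS4
      obtain ⟨b, d, e, -, -, -, ht3⟩ := Finset.card_eq_three.mp ht
      exact ⟨a, b, d, e, by rw [← hins, ht3]⟩
    have hsub : E6 ⊆ {s(a, b), s(a, d), s(a, e), s(b, d), s(b, e), s(d, e)} := by
      intro z hz
      obtain ⟨⟨u, w⟩, huw, rfl⟩ := Finset.mem_image.mp hz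
      rw [Finset.mem_offDiag] at huw
      obtain ⟨hu, hw, hne⟩ := huw
      rw [hS] at hu hw
      simp only [Finset.mem_insert, Finset.mem_singleton] at hu hw ⊢
      rcases hu with rfl | rfl | rfl | rfl <;> rcases hw with rfl | rfl | rfl | rfl <;>
        first
          | exact absurd rfl hne
          | exact Or.inl rfl
          | exact Or.inl Sym2.eq_swap
          | exact Or.inr (Or.inl rfl)
          | exact Or.inr (Or.inl Sym2.eq_swap)
          | exact Or.inr (Or.inr (Or.inl rfl))
          | exact Or.inr (Or.inr (Or.inl Sym2.eq_swap))
          | exact Or.inr (Or.inr (Or.inr (Or.inl rfl)))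
          | exact Or.inr (Or.inr (Or.inr (Or.inl Sym2.eq_swap)))
          | exact Or.inr (Or.inr (Or.inr (Or.inr (Or.inl rfl))))
          | exact Or.inr (Or.inr (Or.inr (Or.inr (Or.inl Sym2.eq_swap))))
          | exact Or.inr (Or.inr (Or.inr (Or.inr (Or.inr rfl))))
          | exact Or.inr (Or.inr (Or.inr (Or.inr (Or.inr Sym2.eq_swap))))
    have c1 := Finset.card_insert_le (s(a,b)) ({s(a,d), s(a,e), s(b,d), s(b,e), s(d,e)} : Finset (Sym2 (Fin n)))
    have c2 := Finset.card_insert_le (s(a,d)) ({s(a,e), s(b,d), s(b,e), s(d,e)} : Finset (Sym2 (Fin n)))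
    have c3 := Finset.card_insert_le (s(a,e)) ({s(b,d), s(b,e), s(d,e)} : Finset (Sym2 (Fin n)))
    have c4 := Finset.card_insert_le (s(b,d)) ({s(b,e), s(d,e)} : Finset (Sym2 (Fin n)))
    have c5 := Finset.card_insert_le (s(b,e)) ({s(d,e)} : Finset (Sym2 (Fin n)))
    have c6 : ({s(d,e)} : Finset (Sym2 (Fin n))).card = 1 := Finset.card_singleton _
    have := Finset.card_le_card hsub
    omega
  have hkey := image_card_add_two_le (f := c)
    (hmem x1 y1 hx1 hy1 hd1) (hmem x2 y2 hx2 hy2 hd2)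
    (hmem x3 y3 hx3 hy3 hd3) (hmem x4 y4 hx4 hy4 hd4)
    h12 h34 hc12 hc34 hp
  rw [himg] at h5
  omega

private def sel {m : ℕ} (v a b : Fin m) : Fin 6 → Fin m × Fin m
  | ⟨0, _⟩ => (v, a)
  | ⟨1, _⟩ => (a, v)
  | ⟨2, _⟩ => (v, b)
  | ⟨3, _⟩ => (b, v)
  | ⟨4, _⟩ => (a, b)
  | ⟨5, _⟩ => (b, a)

private lemma sel_inj {m : ℕ} {v a b : Fin m} (hav : a ≠ v) (hbv : b ≠ v) (hab : a ≠ b)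
    {i i' : Fin 6} (h : sel v a b i = sel v a b i') : i = i' := by
  fin_cases i <;> fin_cases i' <;> simp_all [sel, Prod.ext_iff] <;>
    first
      | rfl
      | (exfalso; revert h; rintro ⟨h1, h2⟩ <;> simp_all)


private lemma cherry_unique {n : ℕ} {c : Sym2 (Fin n) → ℕ}
    (hn : 4 ≤ n)
    (hc : ∀ s : Finset (Fin n), s.card = 4 →
      5 ≤ {k : ℕ | ∃ u ∈ s, ∃ v ∈ s, u ≠ v ∧ c s(u, v) = k}.ncard)
    {v a b v' a' b' : Fin n}
    (hav : a ≠ v) (hbv : b ≠ v) (hab : a ≠ b)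
    (hav' : a' ≠ v') (hbv' : b' ≠ v') (hab' : a' ≠ b')
    (hcol : c s(v, a) = c s(v, b)) (hcol' : c s(v', a') = c s(v', b'))
    (hint : 2 ≤ (({v, a, b} : Finset (Fin n)) ∩ {v', a', b'}).card) :
    v = v' ∧ ({a, b} : Finset (Fin n)) = {a', b'} := by
  by_cases hpair : ({s(v, a), s(v, b)} : Finset (Sym2 (Fin n))) = {s(v', a'), s(v', b')}
  · have h1 : s(v, a) = s(v', a') ∨ s(v, a) = s(v', b') := by
      have : s(v, a) ∈ ({s(v', a'), s(v', b')} : Finset _) :=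
        hpair ▸ Finset.mem_insert_self _ _
      simpa using this
    have h2 : s(v, b) = s(v', a') ∨ s(v, b) = s(v', b') := by
      have : s(v, b) ∈ ({s(v', a'), s(v', b')} : Finset _) :=
        hpair ▸ Finset.mem_insert.mpr (Or.inr (Finset.mem_singleton_self _))
      simpa using this
    simp only [Sym2.eq_iff] at h1 h2
    rcases h1 with (⟨h1a, h1b⟩ | ⟨h1a, h1b⟩) | (⟨h1a, h1b⟩ | ⟨h1a, h1b⟩) <;>
      rcases h2 with (⟨h2a, h2b⟩ | ⟨h2a, h2b⟩) | (⟨h2a, h2b⟩ | ⟨h2a, h2b⟩) <;>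
      first
        | (refine ⟨h1a, ?_⟩; rw [h1b, h2b]; done)
        | (refine ⟨h1a, ?_⟩; rw [h1b, h2b, Finset.pair_comm]; done)
        | exact absurd (h1b.trans h2b.symm) hab
        | exact absurd (h2b.trans h1a.symm) hbv
        | exact absurd (h1b.trans h2a.symm) hav
        | exact absurd (h1a.symm.trans h2a) hab'
        | exact absurd (h2a.symm.trans h1a) hab'
  · have hX : ({v, a, b} : Finset (Fin n)).card ≤ 3 := by
      have c1 := Finset.card_insert_le v ({a, b} : Finset (Fin n))
      have c2 := Finset.card_insert_le a ({b} : Finset (Fin n))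
      have c3 : ({b} : Finset (Fin n)).card = 1 := Finset.card_singleton b
      omega
    have hY : ({v', a', b'} : Finset (Fin n)).card ≤ 3 := by
      have c1 := Finset.card_insert_le v' ({a', b'} : Finset (Fin n))
      have c2 := Finset.card_insert_le a' ({b'} : Finset (Fin n))
      have c3 : ({b'} : Finset (Fin n)).card = 1 := Finset.card_singleton b'
      omega
    have hU := Finset.card_union_add_card_inter ({v, a, b} : Finset (Fin n)) {v', a', b'}
    have hT : (({v, a, b} : Finset (Fin n)) ∪ {v', a', b'}).card ≤ 4 := by omega
    exact (violation hn hc hT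
      (by simp) (by simp) (by simp) (by simp)
      (by simp) (by simp) (by simp) (by simp)
      (Ne.symm hav) (Ne.symm hbv) (Ne.symm hav') (Ne.symm hbv')
      (sym2_ne hav hab) (sym2_ne hav' hab') hpair hcol hcol').elim


/-- In every edge coloring of `K_n` (`n ≥ 4`) in which every 4 vertices span at least
5 distinct colors, the number of colors used is at least `5(n-1)/6`:
`f(n,4,5) ≥ 5(n-1)/6`. -/
theorem f_4_5_lower_bound (n : ℕ) (hn : 4 ≤ n) (c : Sym2 (Fin n) → ℕ)
    (hc : ∀ s : Finset (Fin n), s.card = 4 →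
      5 ≤ {k : ℕ | ∃ u ∈ s, ∃ v ∈ s, u ≠ v ∧ c s(u, v) = k}.ncard) :
    5 * (n - 1) ≤ 6 * {k : ℕ | ∃ u v : Fin n, u ≠ v ∧ c s(u, v) = k}.ncard := by
  classical
  set KF : Finset ℕ :=
    (univ : Finset (Fin n)).offDiag.image (fun p : Fin n × Fin n => c s(p.1, p.2)) with hKF
  have hset : {k : ℕ | ∃ u v : Fin n, u ≠ v ∧ c s(u, v) = k} = ↑KF := by
    ext k
    simp only [hKF, Set.mem_setOf_eq, Finset.coe_image, Set.mem_image, Finset.mem_coe,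
      Finset.mem_offDiag, Finset.mem_univ, true_and]
    constructor
    · rintro ⟨u, v, huv, hk⟩; exact ⟨(u, v), huv, hk⟩
    · rintro ⟨⟨u, v⟩, huv, hk⟩; exact ⟨u, v, huv, hk⟩
  rw [hset, Set.ncard_coe_finset]
  set N : ℕ → Fin n → Finset (Fin n) :=
    fun k v => univ.filter (fun u => u ≠ v ∧ c s(v, u) = k) with hN
  have hmemN : ∀ {k v u}, u ∈ N k v ↔ (u ≠ v ∧ c s(v, u) = k) := by
    intro k v u; rw [hN]; simp
  -- degree bound
  have hdeg : ∀ k v, (N k v).card ≤ 2 := by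
    intro k v
    by_contra hcon
    push_neg at hcon
    obtain ⟨x, y, z, hx, hy, hz, hxy, hxz, hyz⟩ := Finset.two_lt_card_iff.mp hcon
    rw [hmemN] at hx hy hz
    have hT : ({v, x, y, z} : Finset (Fin n)).card ≤ 4 := by
      have c1 := Finset.card_insert_le v ({x, y, z} : Finset (Fin n))
      have c2 := Finset.card_insert_le x ({y, z} : Finset (Fin n))
      have c3 := Finset.card_insert_le y ({z} : Finset (Fin n))
      have c4 : ({z} : Finset (Fin n)).card = 1 := Finset.card_singleton z
      omega
    have hp : ({s(v, x), s(v, y)} : Finset (Sym2 (Fin n))) ≠ {s(v, x), s(v, z)} := by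
      intro h
      have hzm : s(v, z) ∈ ({s(v, x), s(v, y)} : Finset (Sym2 (Fin n))) := by
        rw [h]; simp
      simp only [Finset.mem_insert, Finset.mem_singleton] at hzm
      rcases hzm with h' | h'
      · exact sym2_ne hx.1 hxz h'.symm
      · exact sym2_ne hy.1 hyz h'.symm
    exact violation hn hc hT
      (Finset.mem_insert_self _ _) (by simp) (Finset.mem_insert_self _ _) (by simp)
      (Finset.mem_insert_self _ _) (by simp) (Finset.mem_insert_self _ _) (by simp)
      (Ne.symm hx.1) (Ne.symm hy.1) (Ne.symm hx.1) (Ne.symm hz.1)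
      (sym2_ne hx.1 hxy) (sym2_ne hx.1 hxz) hp
      (hx.2.trans hy.2.symm) (hx.2.trans hz.2.symm)
  -- counting
  have hoff : ((univ : Finset (Fin n)).offDiag).card = n * n - n := by
    rw [Finset.offDiag_card]; simp
  have hpart : ((univ : Finset (Fin n)).offDiag).card
      = ∑ k ∈ KF, ((univ : Finset (Fin n)).offDiag.filter
          fun p => c s(p.1, p.2) = k).card :=
    Finset.card_eq_sum_card_fiberwise (fun p hp => by
      rw [hKF]; exact Finset.mem_image_of_mem _ hp)
  have hA : ∀ k, ((univ : Finset (Fin n)).offDiag.filter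
      (fun p => c s(p.1, p.2) = k)).card = ∑ v : Fin n, (N k v).card := by
    intro k
    rw [Finset.card_eq_sum_card_fiberwise (f := Prod.fst) (t := univ)
      (fun p _ => Finset.mem_univ _)]
    refine Finset.sum_congr rfl fun v _ => ?_
    have himg : (((univ : Finset (Fin n)).offDiag.filter
        (fun p => c s(p.1, p.2) = k)).filter fun p => p.1 = v)
        = (N k v).image (fun u => (v, u)) := by
      ext ⟨p1, p2⟩
      simp only [Finset.mem_filter, Finset.mem_offDiag, Finset.mem_univ, true_and,
        Finset.mem_image, hN, Prod.mk.injEq]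
      constructor
      · rintro ⟨⟨hne, hk⟩, rfl⟩
        exact ⟨p2, ⟨Ne.symm hne, hk⟩, rfl, rfl⟩
      · rintro ⟨u, ⟨hne, hk⟩, rfl, rfl⟩
        exact ⟨⟨Ne.symm hne, hk⟩, rfl⟩
    rw [himg, Finset.card_image_of_injective _ (fun u1 u2 h => by simpa using h)]
  set D : ℕ → Finset (Fin n) := fun k => univ.filter (fun v => (N k v).card = 2) with hD
  have hAle : ∀ k, (∑ v : Fin n, (N k v).card) ≤ n + (D k).card := by
    intro k
    calc ∑ v : Fin n, (N k v).card
        ≤ ∑ v : Fin n, (1 + if (N k v).card = 2 then 1 else 0) :=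
          Finset.sum_le_sum fun v _ => by have := hdeg k v; split_ifs <;> omega
      _ = n + (D k).card := by
          rw [Finset.sum_add_distrib, Finset.sum_const, smul_eq_mul, mul_one,
            Finset.card_univ, Fintype.card_fin, hD, Finset.card_filter]
  set Ch : Finset (ℕ × Fin n) :=
    (KF ×ˢ (univ : Finset (Fin n))).filter (fun q => (N q.1 q.2).card = 2) with hCh
  have hChsum : Ch.card = ∑ k ∈ KF, (D k).card := by
    rw [Finset.card_eq_sum_card_fiberwise (f := Prod.fst) (t := KF) (fun q hq => by
      simp only [Finset.mem_coe, hCh, Finset.mem_filter, Finset.mem_product] at hq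
      exact hq.1.1)]
    refine Finset.sum_congr rfl fun k hk => ?_
    have himg : Ch.filter (fun q => q.1 = k) = (D k).image (fun v => (k, v)) := by
      ext ⟨k2, v⟩
      simp only [hCh, hD, Finset.mem_filter, Finset.mem_product, Finset.mem_univ,
        true_and, and_true, Finset.mem_image, Prod.mk.injEq]
      constructor
      · rintro ⟨⟨-, h2⟩, rfl⟩
        exact ⟨v, h2, rfl, rfl⟩
      · rintro ⟨u, h2, rfl, rfl⟩
        exact ⟨⟨hk, h2⟩, rfl⟩
    rw [himg, Finset.card_image_of_injective _ (fun u1 u2 h => by simpa using h)]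
  set lo : ℕ → Fin n → Fin n :=
    fun k v => if h : (N k v).Nonempty then (N k v).min' h else v with hlo
  set hi : ℕ → Fin n → Fin n :=
    fun k v => if h : (N k v).Nonempty then (N k v).max' h else v with hhi
  have hlohi : ∀ k v, (N k v).card = 2 →
      lo k v ∈ N k v ∧ hi k v ∈ N k v ∧ lo k v < hi k v := by
    intro k v h2
    have hne : (N k v).Nonempty := Finset.card_pos.mp (by omega)
    rw [hlo, hhi]
    simp only [dif_pos hne]
    exact ⟨Finset.min'_mem _ _, Finset.max'_mem _ _,
      Finset.min'_lt_max'_of_card _ (by omega)⟩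
  set Φ : (ℕ × Fin n) × Fin 6 → Fin n × Fin n :=
    fun q => sel q.1.2 (lo q.1.1 q.1.2) (hi q.1.1 q.1.2) q.2 with hΦ
  have hselmem : ∀ (k : ℕ) (v : Fin n) (j : Fin 6), (N k v).card = 2 →
      (Φ ((k, v), j)).1 ∈ ({v, lo k v, hi k v} : Finset (Fin n)) ∧
      (Φ ((k, v), j)).2 ∈ ({v, lo k v, hi k v} : Finset (Fin n)) ∧
      (Φ ((k, v), j)).1 ≠ (Φ ((k, v), j)).2 := by
    intro k v j h2
    obtain ⟨hl, hh, hlt⟩ := hlohi k v h2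
    rw [hmemN] at hl hh
    fin_cases j <;>
      refine ⟨by simp [hΦ, sel], by simp [hΦ, sel], ?_⟩ <;>
      simp only [hΦ, sel] <;>
      first
        | exact Ne.symm hl.1
        | exact hl.1
        | exact Ne.symm hh.1
        | exact hh.1
        | exact ne_of_lt hlt
        | exact (ne_of_lt hlt).symm
  have hkey : 6 * Ch.card ≤ n * n - n := by
    have hinj : (Ch ×ˢ (univ : Finset (Fin 6))).card
        ≤ ((univ : Finset (Fin n)).offDiag).card := by
      apply Finset.card_le_card_of_injOn Φ
      · rintro ⟨⟨k, v⟩, i⟩ hq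
        rw [Finset.mem_coe, Finset.mem_product] at hq
        obtain ⟨hq1, -⟩ := hq
        rw [hCh, Finset.mem_filter] at hq1
        have h2 := hq1.2
        obtain ⟨m1, m2, mne⟩ := hselmem k v i h2
        exact Finset.mem_offDiag.mpr ⟨Finset.mem_univ _, Finset.mem_univ _, mne⟩
      · rintro ⟨⟨k, v⟩, i⟩ hq ⟨⟨k', v'⟩, i'⟩ hq' heq
        rw [Finset.mem_coe, Finset.mem_product] at hq hq'
        obtain ⟨hq1, -⟩ := hq
        obtain ⟨hq1', -⟩ := hq'
        rw [hCh, Finset.mem_filter] at hq1 hq1'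
        have h2 := hq1.2
        have h2' := hq1'.2
        obtain ⟨hl, hh, hlt⟩ := hlohi k v h2
        obtain ⟨hl', hh', hlt'⟩ := hlohi k' v' h2'
        rw [hmemN] at hl hh hl' hh'
        obtain ⟨m1, m2, mne⟩ := hselmem k v i h2
        obtain ⟨m1', m2', mne'⟩ := hselmem k' v' i' h2'
        rw [← heq] at m1' m2'
        have hint : 2 ≤ (({v, lo k v, hi k v} : Finset (Fin n))
            ∩ {v', lo k' v', hi k' v'}).card := by
          have hsub : ({(Φ ((k, v), i)).1, (Φ ((k, v), i)).2} : Finset (Fin n))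
              ⊆ ({v, lo k v, hi k v} : Finset (Fin n)) ∩ {v', lo k' v', hi k' v'} := by
            intro t ht
            simp only [Finset.mem_insert, Finset.mem_singleton] at ht
            rcases ht with rfl | rfl
            · exact Finset.mem_inter.mpr ⟨m1, m1'⟩
            · exact Finset.mem_inter.mpr ⟨m2, m2'⟩
          calc 2 = ({(Φ ((k, v), i)).1, (Φ ((k, v), i)).2} : Finset (Fin n)).card :=
                (Finset.card_pair mne).symm
            _ ≤ _ := Finset.card_le_card hsub
        obtain ⟨hvv, hpairs⟩ := cherry_unique hn hc hl.1 hh.1 (ne_of_lt hlt)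
          hl'.1 hh'.1 (ne_of_lt hlt') (hl.2.trans hh.2.symm) (hl'.2.trans hh'.2.symm) hint
        have hlohieq : lo k v = lo k' v' ∧ hi k v = hi k' v' := by
          have e1 : lo k v ∈ ({lo k' v', hi k' v'} : Finset (Fin n)) := by
            rw [← hpairs]; simp
          have e2 : hi k v ∈ ({lo k' v', hi k' v'} : Finset (Fin n)) := by
            rw [← hpairs]; simp
          simp only [Finset.mem_insert, Finset.mem_singleton] at e1 e2
          rcases e1 with e1 | e1 <;> rcases e2 with e2 | e2
          · exact absurd (e1 ▸ e2 ▸ hlt) (lt_irrefl _)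
          · exact ⟨e1, e2⟩
          · exact absurd (lt_trans (e1 ▸ hlt') (e2 ▸ hlt)) (lt_irrefl _)
          · exact absurd (e1 ▸ e2 ▸ hlt) (lt_irrefl _)
        have hkk : k = k' := by
          rw [← hl.2, hlohieq.1, hvv, hl'.2]
        subst hkk; subst hvv
        suffices hii : i = i' by rw [hii]
        simp only [hΦ] at heq
        exact sel_inj hl.1 hh.1 (ne_of_lt hlt) heq
    rw [Finset.card_product, Finset.card_univ, Fintype.card_fin, hoff] at hinj
    omega
  -- final arithmetic
  have hmain : n * n - n ≤ KF.card * n + Ch.card := by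
    rw [hChsum]
    calc n * n - n = ∑ k ∈ KF, ((univ : Finset (Fin n)).offDiag.filter
          fun p => c s(p.1, p.2) = k).card := by rw [← hpart, hoff]
      _ ≤ ∑ k ∈ KF, (n + (D k).card) :=
          Finset.sum_le_sum fun k _ => by rw [hA k]; exact hAle k
      _ = KF.card * n + ∑ k ∈ KF, (D k).card := by
          rw [Finset.sum_add_distrib, Finset.sum_const, smul_eq_mul]
  have hEeq : (n - 1) * n = n * n - n := Nat.sub_one_mul n n
  have h5E : (5 * (n - 1)) * n ≤ (6 * KF.card) * n := by
    have hgoal : 5 * (n * n - n) ≤ 6 * (KF.card * n) := by omega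
    calc (5 * (n - 1)) * n = 5 * ((n - 1) * n) := by ring
      _ = 5 * (n * n - n) := by rw [hEeq]
      _ ≤ 6 * (KF.card * n) := hgoal
      _ = (6 * KF.card) * n := by ring
  exact Nat.le_of_mul_le_mul_right h5E (by omega)
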